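/- Let f : ℝ → ℝ be monotone (nondecreasing or nonincreasing) on the open interval (0,1) and integrable on (0,1). Then (1/n) · ∑_{r=1}^{n} f(r/(n+1)) → ∫_0^1 f(u) du as n → ∞. -/

import Mathlib

open MeasureTheory Filter
open scoped Topology BigOperators

private lemma piece_intble (f : ℝ → ℝ) (hint : IntegrableOn f (Set.Ioo 0 1))
    {a b : ℝ} (h0 : 0 ≤ a) (hab : a ≤ b) (h1 : b ≤ 1) :
    IntervalIntegrable f volume a b := by
  rw [intervalIntegrable_iff_integrableOn_Ioc_of_le hab,
    integrableOn_Ioc_iff_integrableOn_Ioo]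
  exact hint.mono_set (fun x hx => ⟨lt_of_le_of_lt h0 hx.1, lt_of_lt_of_le hx.2 h1⟩)

private lemma piece_le (f : ℝ → ℝ) (hmono : MonotoneOn f (Set.Ioo 0 1))
    (hint : IntegrableOn f (Set.Ioo 0 1))
    {a b : ℝ} (h0 : 0 ≤ a) (hab : a < b) (h1 : b < 1) :
    ∫ x in a..b, f x ≤ f b * (b - a) := by
  rw [intervalIntegral.integral_of_le hab.le, integral_Ioc_eq_integral_Ioo]
  have hsub : Set.Ioo a b ⊆ Set.Ioo (0:ℝ) 1 :=
    fun x hx => ⟨lt_of_le_of_lt h0 hx.1, hx.2.trans h1⟩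
  have hb : b ∈ Set.Ioo (0:ℝ) 1 := ⟨lt_of_le_of_lt h0 hab, h1⟩
  calc ∫ x in Set.Ioo a b, f x ≤ ∫ _x in Set.Ioo a b, f b :=
        setIntegral_mono_on (hint.mono_set hsub)
          (integrableOn_const (by rw [Real.volume_Ioo]; exact ENNReal.ofReal_ne_top))
          measurableSet_Ioo
          (fun x hx => hmono (hsub hx) hb hx.2.le)
    _ = f b * (b - a) := by
        rw [setIntegral_const, measureReal_def, Real.volume_Ioo, smul_eq_mul,
          ENNReal.toReal_ofReal (by linarith : (0:ℝ) ≤ b - a), mul_comm]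

private lemma piece_ge (f : ℝ → ℝ) (hmono : MonotoneOn f (Set.Ioo 0 1))
    (hint : IntegrableOn f (Set.Ioo 0 1))
    {a b : ℝ} (h0 : 0 < a) (hab : a < b) (h1 : b ≤ 1) :
    f a * (b - a) ≤ ∫ x in a..b, f x := by
  rw [intervalIntegral.integral_of_le hab.le, integral_Ioc_eq_integral_Ioo]
  have hsub : Set.Ioo a b ⊆ Set.Ioo (0:ℝ) 1 :=
    fun x hx => ⟨h0.trans hx.1, lt_of_lt_of_le hx.2 h1⟩
  have ha : a ∈ Set.Ioo (0:ℝ) 1 := ⟨h0, lt_of_lt_of_le hab h1⟩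
  calc f a * (b - a) = ∫ _x in Set.Ioo a b, f a := by
        rw [setIntegral_const, measureReal_def, Real.volume_Ioo, smul_eq_mul,
          ENNReal.toReal_ofReal (by linarith : (0:ℝ) ≤ b - a), mul_comm]
    _ ≤ ∫ x in Set.Ioo a b, f x :=
        setIntegral_mono_on
          (integrableOn_const (by rw [Real.volume_Ioo]; exact ENNReal.ofReal_ne_top))
          (hint.mono_set hsub)
          measurableSet_Ioo
          (fun x hx => hmono ha (hsub hx) hx.1.le)

private lemma claimA (f : ℝ → ℝ) (hmono : MonotoneOn f (Set.Ioo 0 1))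
    (hint : IntegrableOn f (Set.Ioo 0 1)) (n : ℕ) (hn : 1 ≤ n) :
    ∫ x in (0:ℝ)..((n:ℝ)/((n:ℝ)+1)), f x
      ≤ (∑ r ∈ Finset.Icc 1 n, f ((r:ℝ)/((n:ℝ)+1))) / ((n:ℝ)+1) := by
  set N : ℝ := (n:ℝ)+1 with hNdef
  have hN : (0:ℝ) < N := by positivity
  have tele : ∑ k ∈ Finset.range n, ∫ x in ((k:ℕ):ℝ)/N..(((k+1:ℕ)):ℝ)/N, f x
      = ∫ x in (((0:ℕ)):ℝ)/N..((n:ℕ):ℝ)/N, f x := by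
    apply intervalIntegral.sum_integral_adjacent_intervals
    intro k hk
    apply piece_intble f hint
    · positivity
    · gcongr <;> push_cast <;> linarith
    · rw [div_le_one hN]
      push_cast
      have : (k:ℝ) < n := by exact_mod_cast hk
      linarith
  have e : ∫ x in (0:ℝ)..((n:ℝ)/N), f x
      = ∑ k ∈ Finset.range n, ∫ x in ((k:ℕ):ℝ)/N..(((k+1:ℕ)):ℝ)/N, f x := by
    rw [tele]; norm_num
  rw [e, ← Finset.Ico_add_one_right_eq_Icc, Finset.sum_Ico_eq_sum_range, Finset.sum_div]
  apply Finset.sum_le_sum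
  intro k hk
  have hk' : (k:ℝ) < n := by exact_mod_cast Finset.mem_range.1 (by simpa using hk)
  have h := piece_le f hmono hint (a := (k:ℝ)/N) (b := ((k:ℝ)+1)/N)
    (by positivity) (by gcongr <;> linarith) (by rw [div_lt_one hN]; linarith)
  calc ∫ x in ((k:ℕ):ℝ)/N..(((k+1:ℕ)):ℝ)/N, f x
      ≤ f (((k:ℝ)+1)/N) * (((k:ℝ)+1)/N - (k:ℝ)/N) := by
        convert h using 3 <;> push_cast <;> ring
    _ = f ((↑(1+k))/N) / N := by
        push_cast
        rw [show ((k:ℝ)+1)/N - (k:ℝ)/N = 1/N by field_simp; ring, show (1:ℝ)+(k:ℝ) = (k:ℝ)+1 by ring]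
        ring

private lemma claimB (f : ℝ → ℝ) (hmono : MonotoneOn f (Set.Ioo 0 1))
    (hint : IntegrableOn f (Set.Ioo 0 1)) (n : ℕ) (hn : 1 ≤ n) :
    (∑ r ∈ Finset.Icc 1 n, f ((r:ℝ)/((n:ℝ)+1))) / ((n:ℝ)+1)
      ≤ ∫ x in ((1:ℝ)/((n:ℝ)+1))..1, f x := by
  set N : ℝ := (n:ℝ)+1 with hNdef
  have hN : (0:ℝ) < N := by positivity
  have tele : ∑ k ∈ Finset.range n, ∫ x in ((k+1:ℕ):ℝ)/N..(((k+1)+1:ℕ):ℝ)/N, f x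
      = ∫ x in ((0+1:ℕ):ℝ)/N..((n+1:ℕ):ℝ)/N, f x := by
    apply intervalIntegral.sum_integral_adjacent_intervals (a := fun k : ℕ => ((k+1:ℕ):ℝ)/N)
    intro k hk
    apply piece_intble f hint
    · positivity
    · gcongr
      push_cast; linarith
    · rw [div_le_one hN]
      push_cast
      have : (k:ℝ) + 1 ≤ n := by exact_mod_cast hk
      linarith
  have e : ∫ x in ((1:ℝ)/N)..1, f x
      = ∑ k ∈ Finset.range n, ∫ x in ((k+1:ℕ):ℝ)/N..(((k+1)+1:ℕ):ℝ)/N, f x := by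
    rw [tele]
    push_cast
    rw [div_self hN.ne']
  rw [e, ← Finset.Ico_add_one_right_eq_Icc, Finset.sum_Ico_eq_sum_range, Finset.sum_div]
  apply Finset.sum_le_sum
  intro k hk
  have hkn : k + 1 ≤ n := Finset.mem_range.1 (by simpa using hk)
  have hk' : (k:ℝ) + 1 ≤ n := by exact_mod_cast hkn
  have h := piece_ge f hmono hint (a := ((k:ℝ)+1)/N) (b := ((k:ℝ)+2)/N)
    (by positivity) (by gcongr; linarith) (by rw [div_le_one hN]; push_cast; linarith)
  calc f ((↑(1+k))/N) / N
      = f (((k:ℝ)+1)/N) * (((k:ℝ)+2)/N - ((k:ℝ)+1)/N) := by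
        push_cast
        rw [show ((k:ℝ)+2)/N - ((k:ℝ)+1)/N = 1/N by field_simp; ring,
          show (1:ℝ)+(k:ℝ) = (k:ℝ)+1 by ring]
        ring
    _ ≤ ∫ x in (((k:ℝ)+1)/N)..(((k:ℝ)+2)/N), f x := h
    _ = ∫ x in ((k+1:ℕ):ℝ)/N..(((k+1)+1:ℕ):ℝ)/N, f x := by
        congr 1 <;> push_cast <;> ring

private lemma ratio_tendsto : Tendsto (fun n : ℕ => ((n:ℝ)+1)/n) atTop (𝓝 1) := by
  have h : (fun n : ℕ => (1:ℝ) + 1/n) =ᶠ[atTop] (fun n : ℕ => ((n:ℝ)+1)/n) := by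
    filter_upwards [eventually_ge_atTop 1] with n hn
    have : (n:ℝ) ≠ 0 := by positivity
    field_simp
  have h2 := (tendsto_const_nhds.add tendsto_one_div_atTop_nhds_zero_nat).congr' h
  norm_num at h2
  exact h2

private lemma lower_int_tendsto (f : ℝ → ℝ) (hint : IntegrableOn f (Set.Ioo 0 1)) :
    Tendsto (fun n : ℕ => ∫ x in (0:ℝ)..((n:ℝ)/((n:ℝ)+1)), f x) atTop
      (𝓝 (∫ u in Set.Ioo (0:ℝ) 1, f u)) := by
  have hU : (⋃ n : ℕ, Set.Ioo (0:ℝ) ((n:ℝ)/((n:ℝ)+1))) = Set.Ioo 0 1 := by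
    ext x
    simp only [Set.mem_iUnion, Set.mem_Ioo]
    constructor
    · rintro ⟨n, hx0, hxn⟩
      refine ⟨hx0, hxn.trans_le ?_⟩
      rw [div_le_one (by positivity)]
      linarith
    · rintro ⟨hx0, hx1⟩
      obtain ⟨n, hn⟩ := exists_nat_gt (x/(1-x))
      refine ⟨n, hx0, ?_⟩
      have h1x : (0:ℝ) < 1 - x := by linarith
      rw [div_lt_iff₀ h1x] at hn
      rw [lt_div_iff₀ (by positivity)]
      nlinarith
  have hmonoS : Monotone (fun n : ℕ => Set.Ioo (0:ℝ) ((n:ℝ)/((n:ℝ)+1))) := by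
    intro m n hmn
    apply Set.Ioo_subset_Ioo le_rfl
    rw [div_le_div_iff₀ (by positivity) (by positivity)]
    have : (m:ℝ) ≤ n := by exact_mod_cast hmn
    nlinarith
  have h := tendsto_setIntegral_of_monotone (μ := volume) (f := f)
    (fun n : ℕ => measurableSet_Ioo) hmonoS (hU ▸ hint)
  rw [hU] at h
  apply h.congr
  intro n
  rw [intervalIntegral.integral_of_le (by positivity), integral_Ioc_eq_integral_Ioo]

private lemma upper_int_tendsto (f : ℝ → ℝ) (hint : IntegrableOn f (Set.Ioo 0 1)) :
    Tendsto (fun n : ℕ => ∫ x in ((1:ℝ)/((n:ℝ)+1))..1, f x) atTop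
      (𝓝 (∫ u in Set.Ioo (0:ℝ) 1, f u)) := by
  have hU : (⋃ n : ℕ, Set.Ioo ((1:ℝ)/((n:ℝ)+1)) 1) = Set.Ioo 0 1 := by
    ext x
    simp only [Set.mem_iUnion, Set.mem_Ioo]
    constructor
    · rintro ⟨n, hx0, hx1⟩
      exact ⟨lt_trans (by positivity) hx0, hx1⟩
    · rintro ⟨hx0, hx1⟩
      obtain ⟨n, hn⟩ := exists_nat_gt (1/x)
      refine ⟨n, ?_, hx1⟩
      rw [div_lt_iff₀ hx0] at hn
      rw [div_lt_iff₀ (by positivity)]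
      nlinarith
  have hmonoS : Monotone (fun n : ℕ => Set.Ioo ((1:ℝ)/((n:ℝ)+1)) 1) := by
    intro m n hmn
    apply Set.Ioo_subset_Ioo _ le_rfl
    apply div_le_div_of_nonneg_left (by norm_num) (by positivity)
    have : (m:ℝ) ≤ n := by exact_mod_cast hmn
    linarith
  have h := tendsto_setIntegral_of_monotone (μ := volume) (f := f)
    (fun n : ℕ => measurableSet_Ioo) hmonoS (hU ▸ hint)
  rw [hU] at h
  apply h.congr
  intro n
  rw [intervalIntegral.integral_of_le, integral_Ioc_eq_integral_Ioo]
  rw [div_le_one (by positivity)]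
  have : (0:ℝ) ≤ n := Nat.cast_nonneg n
  linarith

private lemma aux_mono (f : ℝ → ℝ) (hmono : MonotoneOn f (Set.Ioo 0 1))
    (hint : IntegrableOn f (Set.Ioo 0 1)) :
    Tendsto
      (fun n : ℕ => (1 / (n : ℝ)) * ∑ r ∈ Finset.Icc 1 n, f ((r : ℝ) / ((n : ℝ) + 1)))
      atTop (𝓝 (∫ u in Set.Ioo (0 : ℝ) 1, f u)) := by
  have hlow := ratio_tendsto.mul (lower_int_tendsto f hint)
  have hupp := ratio_tendsto.mul (upper_int_tendsto f hint)
  rw [one_mul] at hlow hupp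
  apply tendsto_of_tendsto_of_tendsto_of_le_of_le' hlow hupp
  · filter_upwards [eventually_ge_atTop 1] with n hn
    have hn' : (1:ℝ) ≤ n := by exact_mod_cast hn
    have hpos : (0:ℝ) ≤ ((n:ℝ)+1)/n := by positivity
    calc (((n:ℝ)+1)/n) * ∫ x in (0:ℝ)..((n:ℝ)/((n:ℝ)+1)), f x
        ≤ (((n:ℝ)+1)/n) * ((∑ r ∈ Finset.Icc 1 n, f ((r:ℝ)/((n:ℝ)+1))) / ((n:ℝ)+1)) :=
          mul_le_mul_of_nonneg_left (claimA f hmono hint n hn) hpos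
      _ = (1/(n:ℝ)) * ∑ r ∈ Finset.Icc 1 n, f ((r:ℝ)/((n:ℝ)+1)) := by
          have h1 : (n:ℝ) ≠ 0 := by positivity
          have h2 : (n:ℝ)+1 ≠ 0 := by positivity
          field_simp
  · filter_upwards [eventually_ge_atTop 1] with n hn
    have hn' : (1:ℝ) ≤ n := by exact_mod_cast hn
    have hpos : (0:ℝ) ≤ ((n:ℝ)+1)/n := by positivity
    calc (1/(n:ℝ)) * ∑ r ∈ Finset.Icc 1 n, f ((r:ℝ)/((n:ℝ)+1))
        = (((n:ℝ)+1)/n) * ((∑ r ∈ Finset.Icc 1 n, f ((r:ℝ)/((n:ℝ)+1))) / ((n:ℝ)+1)) := by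
          have h1 : (n:ℝ) ≠ 0 := by positivity
          have h2 : (n:ℝ)+1 ≠ 0 := by positivity
          field_simp
      _ ≤ (((n:ℝ)+1)/n) * ∫ x in ((1:ℝ)/((n:ℝ)+1))..1, f x :=
          mul_le_mul_of_nonneg_left (claimB f hmono hint n hn) hpos

/-- Riemann-sum convergence for monotone integrable score functions (sufficiency claim
after Assumption 2.1): if `f` is monotone and integrable on `(0,1)`, then
`n⁻¹ ∑_{r=1}^n f(r/(n+1)) → ∫₀¹ f`. -/
theorem monotone_score_riemann_sum
    (f : ℝ → ℝ)
    (hmono : MonotoneOn f (Set.Ioo 0 1) ∨ AntitoneOn f (Set.Ioo 0 1))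
    (hint : IntegrableOn f (Set.Ioo 0 1)) :
    Tendsto
      (fun n : ℕ => (1 / (n : ℝ)) * ∑ r ∈ Finset.Icc 1 n, f ((r : ℝ) / ((n : ℝ) + 1)))
      atTop (𝓝 (∫ u in Set.Ioo (0 : ℝ) 1, f u)) := by
  rcases hmono with h | h
  · exact aux_mono f h hint
  · have hm : MonotoneOn (fun x => -f x) (Set.Ioo 0 1) :=
      fun x hx y hy hxy => neg_le_neg (h hx hy hxy)
    have T := (aux_mono (fun x => -f x) hm hint.neg).neg
    have hlim : -∫ u in Set.Ioo (0:ℝ) 1, -f u = ∫ u in Set.Ioo (0:ℝ) 1, f u := by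
      rw [integral_neg, neg_neg]
    rw [hlim] at T
    apply T.congr
    intro n
    simp [Finset.sum_neg_distrib]
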